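/- Let ℓ : ℝ^d → ℝ be convex and differentiable with L-Lipschitz gradient (L > 0). If gradient descent is run for k steps with learning rate α ≤ 1/L starting from θ⁽⁰⁾, then ℓ(θ⁽ᵏ⁾) − ℓ(θ*) ≤ ‖θ⁽⁰⁾ − θ*‖² / (2kα), where θ* is a global minimizer of ℓ. -/

import Mathlib

open Set Finset
open scoped RealInnerProductSpace

section Aux

variable {E : Type*} [NormedAddCommGroup E] [InnerProductSpace ℝ E] [CompleteSpace E]

/-- Derivative of a function along a line, via its gradient. -/
lemma gd_line_hasDerivAt {f : E → ℝ} {g : E → E} (hgrad : ∀ θ, HasGradientAt f (g θ) θ)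
    (x v : E) (t : ℝ) :
    HasDerivAt (fun s : ℝ => f (x + s • v)) ⟪g (x + t • v), v⟫ t := by
  have hline : HasDerivAt (fun s : ℝ => x + s • v) v t := by
    simpa using ((hasDerivAt_id t).smul_const v).const_add x
  have hf := hasGradientAt_iff_hasFDerivAt.mp (hgrad (x + t • v))
  have := hf.comp_hasDerivAt t hline
  simp [InnerProductSpace.toDual_apply_apply] at this
  exact this

/-- For a convex function on ℝ with derivative `D` at `0`, `φ 0 + D ≤ φ 1`. -/
lemma gd_convex_line_ineq {φ : ℝ → ℝ} (hφ : ConvexOn ℝ Set.univ φ) {D : ℝ}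
    (hD : HasDerivAt φ D 0) : φ 0 + D ≤ φ 1 := by
  have h := hφ.le_slope_of_hasDerivAt (mem_univ (0 : ℝ)) (mem_univ (1 : ℝ)) one_pos hD
  rw [slope_def_field] at h
  simp at h
  linarith

/-- Restriction of a convex function to a line is convex. -/
lemma gd_line_convex {f : E → ℝ} (hf : ConvexOn ℝ Set.univ f) (x v : E) :
    ConvexOn ℝ Set.univ (fun t : ℝ => f (x + t • v)) := by
  have heq : (fun t : ℝ => f (x + t • v)) = f ∘ (AffineMap.lineMap x (x + v)) := by
    funext t
    simp [AffineMap.lineMap_apply, add_comm]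
  rw [heq]
  simpa using hf.comp_affineMap (AffineMap.lineMap x (x + v))

/-- Gradient inequality for convex differentiable functions. -/
lemma gd_grad_ineq {f : E → ℝ} {g : E → E} (hconv : ConvexOn ℝ Set.univ f)
    (hgrad : ∀ θ, HasGradientAt f (g θ) θ) (x y : E) :
    f x + ⟪g x, y - x⟫ ≤ f y := by
  have hD := gd_line_hasDerivAt hgrad x (y - x) 0
  simp only [zero_smul, add_zero] at hD
  have h := gd_convex_line_ineq (gd_line_convex hconv x (y - x)) hD
  simpa using h

/-- Derivative along a line of `p ↦ L/2 ‖p‖² - f p`. -/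
lemma gd_hfun_line_hasDerivAt {f : E → ℝ} {g : E → E} {L : ℝ}
    (hgrad : ∀ θ, HasGradientAt f (g θ) θ) (x v : E) (t : ℝ) :
    HasDerivAt (fun s : ℝ => L / 2 * ‖x + s • v‖ ^ 2 - f (x + s • v))
      (L * ⟪x + t • v, v⟫ - ⟪g (x + t • v), v⟫) t := by
  have h1 : HasDerivAt (fun s : ℝ => L / 2 * ‖x + s • v‖ ^ 2)
      (L * ⟪x, v⟫ + L * ‖v‖ ^ 2 * t) t := by
    have ha : HasDerivAt (fun s : ℝ => L * ⟪x, v⟫ * s) (L * ⟪x, v⟫) t := by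
      simpa using (hasDerivAt_id t).const_mul (L * ⟪x, v⟫)
    have hb : HasDerivAt (fun s : ℝ => L / 2 * ‖v‖ ^ 2 * s ^ 2)
        (L / 2 * ‖v‖ ^ 2 * (2 * t)) t := by
      simpa using (hasDerivAt_pow 2 t).const_mul (L / 2 * ‖v‖ ^ 2)
    have hq := (ha.add hb).const_add (L / 2 * ‖x‖ ^ 2)
    have heq : (fun s : ℝ => L / 2 * ‖x + s • v‖ ^ 2) =
        fun s : ℝ => L / 2 * ‖x‖ ^ 2 + (L * ⟪x, v⟫ * s + L / 2 * ‖v‖ ^ 2 * s ^ 2) := by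
      funext s
      rw [norm_add_sq_real, real_inner_smul_right, norm_smul]
      simp only [Real.norm_eq_abs, mul_pow, sq_abs]
      ring
    rw [heq]
    exact hq.congr_deriv (by ring)
  have h2 := gd_line_hasDerivAt hgrad x v t
  have h3 := h1.sub h2
  exact h3.congr_deriv (by
    rw [inner_add_left, real_inner_smul_left, real_inner_self_eq_norm_sq]
    ring)

/-- `p ↦ L/2 ‖p‖² - f p` is convex when `f` has `L`-Lipschitz gradient. -/
lemma gd_hfun_convex {f : E → ℝ} {g : E → E} {L : ℝ}
    (hgrad : ∀ θ, HasGradientAt f (g θ) θ)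
    (hlip : ∀ θ₁ θ₂ : E, ‖g θ₁ - g θ₂‖ ≤ L * ‖θ₁ - θ₂‖) :
    ConvexOn ℝ Set.univ (fun p : E => L / 2 * ‖p‖ ^ 2 - f p) := by
  set h : E → ℝ := fun p => L / 2 * ‖p‖ ^ 2 - f p with hh
  have hline : ∀ x v : E, ConvexOn ℝ Set.univ (fun t : ℝ => h (x + t • v)) := by
    intro x v
    set D : ℝ → ℝ := fun t => L * ⟪x + t • v, v⟫ - ⟪g (x + t • v), v⟫ with hD
    have hder : ∀ t : ℝ, HasDerivAt (fun s : ℝ => h (x + s • v)) (D t) t := fun t =>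
      gd_hfun_line_hasDerivAt hgrad x v t
    have hdiff : Differentiable ℝ (fun s : ℝ => h (x + s • v)) :=
      fun t => (hder t).differentiableAt
    have hderiv : deriv (fun s : ℝ => h (x + s • v)) = D := by
      funext t; exact (hder t).deriv
    have hmono : Monotone D := by
      intro s t hst
      have hsub : (x + t • v) - (x + s • v) = (t - s) • v := by
        rw [sub_smul]; abel
      have h1 : ⟪g (x + t • v) - g (x + s • v), v⟫ ≤
          ‖g (x + t • v) - g (x + s • v)‖ * ‖v‖ := real_inner_le_norm _ _
      have h2 : ‖g (x + t • v) - g (x + s • v)‖ ≤ L * ((t - s) * ‖v‖) := by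
        have := hlip (x + t • v) (x + s • v)
        rwa [hsub, norm_smul, Real.norm_eq_abs, abs_of_nonneg (by linarith)] at this
      have h3 : ⟪g (x + t • v) - g (x + s • v), v⟫ ≤ L * (t - s) * (‖v‖ * ‖v‖) := by
        calc ⟪g (x + t • v) - g (x + s • v), v⟫ ≤
            ‖g (x + t • v) - g (x + s • v)‖ * ‖v‖ := h1
          _ ≤ L * ((t - s) * ‖v‖) * ‖v‖ := by
              apply mul_le_mul_of_nonneg_right h2 (norm_nonneg v)
          _ = L * (t - s) * (‖v‖ * ‖v‖) := by ring
      have h4 : ⟪x + t • v, v⟫ - ⟪x + s • v, v⟫ = (t - s) * (‖v‖ * ‖v‖) := by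
        rw [← inner_sub_left, hsub, real_inner_smul_left, real_inner_self_eq_norm_mul_norm]
      have h5 : ⟪g (x + t • v), v⟫ - ⟪g (x + s • v), v⟫ ≤ L * (t - s) * (‖v‖ * ‖v‖) := by
        rwa [← inner_sub_left]
      have h4' : L * (⟪x + t • v, v⟫ - ⟪x + s • v, v⟫) = L * (t - s) * (‖v‖ * ‖v‖) := by
        rw [h4]; ring
      simp only [hD]
      linarith [h4', h5]
    rw [← hderiv] at hmono
    exact hmono.convexOn_univ_of_deriv hdiff
  refine ⟨convex_univ, fun p _ q _ a b ha hb hab => ?_⟩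
  have hc := (hline p (q - p)).2 (mem_univ (0 : ℝ)) (mem_univ (1 : ℝ)) ha hb hab
  have e0 : p + (0 : ℝ) • (q - p) = p := by module
  have e1 : p + (1 : ℝ) • (q - p) = q := by module
  have eb : a • (0 : ℝ) + b • (1 : ℝ) = b := by simp
  simp only [e0, e1, eb] at hc
  have harg : a • p + b • q = p + b • (q - p) := by
    have ha1 : a = 1 - b := by linarith
    rw [ha1]
    module
  rw [harg]
  exact hc

/-- Descent lemma. -/
lemma gd_descent {f : E → ℝ} {g : E → E} {L : ℝ}
    (hgrad : ∀ θ, HasGradientAt f (g θ) θ)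
    (hlip : ∀ θ₁ θ₂ : E, ‖g θ₁ - g θ₂‖ ≤ L * ‖θ₁ - θ₂‖) (x y : E) :
    f y ≤ f x + ⟪g x, y - x⟫ + L / 2 * ‖y - x‖ ^ 2 := by
  have hconvh := gd_hfun_convex hgrad hlip
  have hD := gd_hfun_line_hasDerivAt (L := L) hgrad x (y - x) 0
  simp only [zero_smul, add_zero] at hD
  have h := gd_convex_line_ineq (gd_line_convex hconvh x (y - x)) hD
  simp only [zero_smul, add_zero, one_smul, add_sub_cancel] at h
  have hnorm : ‖y - x‖ ^ 2 = ‖y‖ ^ 2 - 2 * ⟪x, y - x⟫ - ‖x‖ ^ 2 := by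
    rw [norm_sub_sq_real, inner_sub_right, real_inner_self_eq_norm_sq,
      real_inner_comm]
    ring
  rw [hnorm]
  linarith [h]

end Aux

/-- Convergence rate of gradient descent for convex functions with Lipschitz gradient:
after `k` steps with learning rate `α ≤ 1/L`,
`ℓ(θ⁽ᵏ⁾) − ℓ(θ*) ≤ ‖θ⁽⁰⁾ − θ*‖² / (2kα)`. -/
theorem gradient_descent_convergence (d : ℕ)
    (ℓ : EuclideanSpace ℝ (Fin d) → ℝ)
    (g : EuclideanSpace ℝ (Fin d) → EuclideanSpace ℝ (Fin d))
    (L α : ℝ) (hL : 0 < L) (hα : 0 < α) (hαL : α ≤ 1 / L)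
    (hconv : ConvexOn ℝ Set.univ ℓ)
    (hgrad : ∀ θ, HasGradientAt ℓ (g θ) θ)
    (hlip : ∀ θ₁ θ₂, ‖g θ₁ - g θ₂‖ ≤ L * ‖θ₁ - θ₂‖)
    (θstar : EuclideanSpace ℝ (Fin d)) (hmin : ∀ x, ℓ θstar ≤ ℓ x)
    (θ : ℕ → EuclideanSpace ℝ (Fin d))
    (hstep : ∀ i : ℕ, θ (i + 1) = θ i - α • g (θ i))
    (k : ℕ) (hk : 1 ≤ k) :
    ℓ (θ k) - ℓ θstar ≤ ‖θ 0 - θstar‖ ^ 2 / (2 * k * α) := by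
  have hαL' : α * L ≤ 1 := by
    rw [le_div_iff₀ hL] at hαL
    linarith
  set r : ℕ → ℝ := fun i => ‖θ i - θstar‖ ^ 2 with hr
  -- one-step decrease
  have hdec : ∀ i : ℕ, ℓ (θ (i + 1)) ≤ ℓ (θ i) - α / 2 * ‖g (θ i)‖ ^ 2 := by
    intro i
    have hdes := gd_descent hgrad hlip (θ i) (θ (i + 1))
    rw [hstep i] at hdes ⊢
    have hdiff : θ i - α • g (θ i) - θ i = -(α • g (θ i)) := by abel
    rw [hdiff] at hdes
    have hin : ⟪g (θ i), -(α • g (θ i))⟫ = -(α * ‖g (θ i)‖ ^ 2) := by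
      rw [inner_neg_right, real_inner_smul_right, real_inner_self_eq_norm_sq]
    have hn : ‖-(α • g (θ i))‖ ^ 2 = α ^ 2 * ‖g (θ i)‖ ^ 2 := by
      rw [norm_neg, norm_smul, Real.norm_eq_abs, mul_pow, sq_abs]
    rw [hin, hn] at hdes
    nlinarith [sq_nonneg ‖g (θ i)‖, hα.le, hαL',
      mul_nonneg hα.le (sq_nonneg ‖g (θ i)‖)]
  -- one-step progress towards the optimum
  have hstepA : ∀ i : ℕ, ℓ (θ (i + 1)) - ℓ θstar ≤ (r i - r (i + 1)) / (2 * α) := by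
    intro i
    have hgi := gd_grad_ineq hconv hgrad (θ i) θstar
    have hinner : ⟪g (θ i), θstar - θ i⟫ = -⟪g (θ i), θ i - θstar⟫ := by
      rw [← inner_neg_right]; congr 1; abel
    have hgi' : ℓ (θ i) ≤ ℓ θstar + ⟪g (θ i), θ i - θstar⟫ := by
      rw [hinner] at hgi; linarith
    have hrdiff : r i - r (i + 1) =
        2 * α * ⟪θ i - θstar, g (θ i)⟫ - α ^ 2 * ‖g (θ i)‖ ^ 2 := by
      simp only [hr]
      rw [hstep i]
      have harg : θ i - α • g (θ i) - θstar = (θ i - θstar) - α • g (θ i) := by abel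
      have hexp : ‖(θ i - θstar) - α • g (θ i)‖ ^ 2 = ‖θ i - θstar‖ ^ 2 -
          2 * (α * ⟪θ i - θstar, g (θ i)⟫) + α ^ 2 * ‖g (θ i)‖ ^ 2 := by
        rw [norm_sub_sq_real, real_inner_smul_right, norm_smul, Real.norm_eq_abs,
          mul_pow, sq_abs]
      rw [harg, hexp]
      ring
    have hcomm : ⟪θ i - θstar, g (θ i)⟫ = ⟪g (θ i), θ i - θstar⟫ := real_inner_comm _ _
    have hd := hdec i
    rw [hrdiff, hcomm]
    have h2α : (0:ℝ) < 2 * α := by positivity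
    rw [le_div_iff₀ h2α]
    have hX : ℓ (θ (i + 1)) - ℓ θstar ≤
        ⟪g (θ i), θ i - θstar⟫ - α / 2 * ‖g (θ i)‖ ^ 2 := by linarith
    calc (ℓ (θ (i + 1)) - ℓ θstar) * (2 * α)
        ≤ (⟪g (θ i), θ i - θstar⟫ - α / 2 * ‖g (θ i)‖ ^ 2) * (2 * α) :=
          mul_le_mul_of_nonneg_right hX h2α.le
      _ = 2 * α * ⟪g (θ i), θ i - θstar⟫ - α ^ 2 * ‖g (θ i)‖ ^ 2 := by ring
  -- sum of progress
  have hsum : ∑ i ∈ Finset.range k, (ℓ (θ (i + 1)) - ℓ θstar) ≤ r 0 / (2 * α) := by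
    have h2α : (0:ℝ) < 2 * α := by positivity
    calc ∑ i ∈ Finset.range k, (ℓ (θ (i + 1)) - ℓ θstar)
        ≤ ∑ i ∈ Finset.range k, (r i - r (i + 1)) / (2 * α) :=
          Finset.sum_le_sum fun i _ => hstepA i
      _ = (r 0 - r k) / (2 * α) := by rw [← Finset.sum_div, Finset.sum_range_sub']
      _ ≤ r 0 / (2 * α) := by
          have hrk : (0:ℝ) ≤ r k := by simp only [hr]; positivity
          gcongr
          linarith
  -- monotone decrease
  have hmono : ∀ m n : ℕ, m ≤ n → ℓ (θ n) ≤ ℓ (θ m) := by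
    intro m n hmn
    induction n, hmn using Nat.le_induction with
    | base => exact le_refl _
    | succ n hmn ih =>
        have := hdec n
        nlinarith [sq_nonneg ‖g (θ n)‖, hα.le]
  -- lower bound for the sum
  have hklb : (k : ℝ) * (ℓ (θ k) - ℓ θstar) ≤
      ∑ i ∈ Finset.range k, (ℓ (θ (i + 1)) - ℓ θstar) := by
    have hb : ∀ i ∈ Finset.range k, ℓ (θ k) - ℓ θstar ≤ ℓ (θ (i + 1)) - ℓ θstar := by
      intro i hi
      have : i + 1 ≤ k := Finset.mem_range.mp hi
      have := hmono (i + 1) k this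
      linarith
    have := Finset.card_nsmul_le_sum (Finset.range k) _ _ hb
    simpa [nsmul_eq_mul] using this
  have hkpos : (0:ℝ) < (k : ℝ) := by exact_mod_cast Nat.lt_of_lt_of_le Nat.zero_lt_one hk
  have hfin : ℓ (θ k) - ℓ θstar ≤ (r 0 / (2 * α)) / k := by
    rw [le_div_iff₀ hkpos]
    calc (ℓ (θ k) - ℓ θstar) * k = (k : ℝ) * (ℓ (θ k) - ℓ θstar) := by ring
      _ ≤ ∑ i ∈ Finset.range k, (ℓ (θ (i + 1)) - ℓ θstar) := hklb
      _ ≤ r 0 / (2 * α) := hsum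
  calc ℓ (θ k) - ℓ θstar ≤ (r 0 / (2 * α)) / k := hfin
    _ = ‖θ 0 - θstar‖ ^ 2 / (2 * k * α) := by
        rw [div_div]
        congr 1
        ring
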